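/- Let E be a real Hausdorff locally convex topological vector space whose continuous linear functionals separate points, let X ⊆ E be a nonempty compact convex set, and let p be an extreme point of X. Then the sets {x ∈ X : φ(x) > 0}, where φ ranges over continuous affine functions on X with φ(p) > 0, form a basis of neighborhoods of p in X: for every subset U of X that is a neighborhood of p in X, there exists a continuous affine φ : X → ℝ with φ(p) > 0 and {x ∈ X : φ(x) > 0} ⊆ U. -/

import Mathlib

open Set Topology

section Aux

variable {E : Type*} [AddCommGroup E] [Module ℝ E] [TopologicalSpace E]
    [IsTopologicalAddGroup E] [ContinuousSMul ℝ E]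

/-- The convex join of two compact sets is compact. -/
lemma aux_isCompact_convexJoin {s t : Set E} (hs : IsCompact s) (ht : IsCompact t) :
    IsCompact (convexJoin ℝ s t) := by
  have heq : convexJoin ℝ s t =
      (fun q : (ℝ × E) × E => (1 - q.1.1) • q.1.2 + q.1.1 • q.2) ''
        ((Icc (0:ℝ) 1 ×ˢ s) ×ˢ t) := by
    ext z
    constructor
    · intro hz
      rw [mem_convexJoin] at hz
      obtain ⟨a, ha, b, hb, hzseg⟩ := hz
      rw [segment_eq_image] at hzseg
      obtain ⟨θ, hθ, rfl⟩ := hzseg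
      exact ⟨((θ, a), b), ⟨⟨hθ, ha⟩, hb⟩, rfl⟩
    · rintro ⟨⟨⟨θ, a⟩, b⟩, ⟨⟨hθ, ha⟩, hb⟩, rfl⟩
      rw [mem_convexJoin]
      refine ⟨a, ha, b, hb, ?_⟩
      rw [segment_eq_image]
      exact ⟨θ, hθ, rfl⟩
  rw [heq]
  exact ((isCompact_Icc.prod hs).prod ht).image <| by fun_prop

/-- The convex hull of a finite union of compact convex sets is compact. -/
lemma aux_isCompact_convexHull_biUnion {α : Type*} (t : Finset α) (C : α → Set E)
    (hcomp : ∀ a ∈ t, IsCompact (C a)) (hconv : ∀ a ∈ t, Convex ℝ (C a)) :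
    IsCompact (convexHull ℝ (⋃ a ∈ t, C a)) := by
  classical
  induction t using Finset.induction_on with
  | empty => simp [convexHull_empty, isCompact_empty]
  | @insert a s ha IH =>
    have hIH := IH (fun b hb => hcomp b (Finset.mem_insert_of_mem hb))
      (fun b hb => hconv b (Finset.mem_insert_of_mem hb))
    have hCa : IsCompact (C a) := hcomp a (Finset.mem_insert_self a s)
    have hCac : Convex ℝ (C a) := hconv a (Finset.mem_insert_self a s)
    rw [Finset.set_biUnion_insert]
    rcases (C a).eq_empty_or_nonempty with hae | hane
    · rw [hae, empty_union]; exact hIH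
    rcases (⋃ b ∈ s, C b).eq_empty_or_nonempty with hse | hsne
    · rw [hse, union_empty, hCac.convexHull_eq]; exact hCa
    rw [convexHull_union hane hsne, hCac.convexHull_eq]
    exact aux_isCompact_convexJoin hCa hIH

/-- If an extreme point of `X` lies in the convex hull of a finite union of convex subsets
of `X`, then it lies in one of them. -/
lemma aux_extreme_mem_of_mem_convexHull_biUnion {α : Type*} {X : Set E} (hXconv : Convex ℝ X)
    {p : E} (hp : p ∈ Set.extremePoints ℝ X) (t : Finset α) (C : α → Set E)
    (hsub : ∀ a ∈ t, C a ⊆ X) (hconv : ∀ a ∈ t, Convex ℝ (C a))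
    (hmem : p ∈ convexHull ℝ (⋃ a ∈ t, C a)) : ∃ a ∈ t, p ∈ C a := by
  classical
  induction t using Finset.induction_on with
  | empty => simp [convexHull_empty] at hmem
  | @insert a s ha IH =>
    have hsub' : ∀ b ∈ s, C b ⊆ X := fun b hb => hsub b (Finset.mem_insert_of_mem hb)
    have hconv' : ∀ b ∈ s, Convex ℝ (C b) := fun b hb => hconv b (Finset.mem_insert_of_mem hb)
    have hCa : Convex ℝ (C a) := hconv a (Finset.mem_insert_self a s)
    have hCaX : C a ⊆ X := hsub a (Finset.mem_insert_self a s)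
    have hsX : (⋃ b ∈ s, C b) ⊆ X := iUnion₂_subset hsub'
    rw [Finset.set_biUnion_insert] at hmem
    rcases (C a).eq_empty_or_nonempty with hae | hane
    · rw [hae, empty_union] at hmem
      obtain ⟨b, hb, hpb⟩ := IH hsub' hconv' hmem
      exact ⟨b, Finset.mem_insert_of_mem hb, hpb⟩
    rcases (⋃ b ∈ s, C b).eq_empty_or_nonempty with hse | hsne
    · rw [hse, union_empty, hCa.convexHull_eq] at hmem
      exact ⟨a, Finset.mem_insert_self a s, hmem⟩
    rw [convexHull_union hane hsne, hCa.convexHull_eq, mem_convexJoin] at hmem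
    obtain ⟨x, hx, y, hy, hseg⟩ := hmem
    have hxX : x ∈ X := hCaX hx
    have hyX : y ∈ X := convexHull_min hsX hXconv hy
    rw [segment_eq_image] at hseg
    obtain ⟨θ, ⟨hθ0, hθ1⟩, hpe⟩ := hseg
    rcases eq_or_lt_of_le hθ0 with h0 | h0
    · refine ⟨a, Finset.mem_insert_self a s, ?_⟩
      rw [← hpe, ← h0]; simpa using hx
    rcases eq_or_lt_of_le hθ1 with h1 | h1
    · have : p = y := by rw [← hpe, h1]; simp
      obtain ⟨b, hb, hpb⟩ := IH hsub' hconv' (this ▸ hy)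
      exact ⟨b, Finset.mem_insert_of_mem hb, hpb⟩
    · have hopen : p ∈ openSegment ℝ x y :=
        ⟨1 - θ, θ, by linarith, h0, by ring, hpe⟩
      have hxp : x = p := hp.2 hxX hyX hopen
      exact ⟨a, Finset.mem_insert_self a s, hxp ▸ hx⟩

/-- Milman-type lemma: an extreme point of a compact convex set `X` that is not in the compact
set `K ⊆ X` is not in the closed convex hull of `K`. -/
lemma aux_extreme_not_mem_closure_convexHull [T2Space E] [LocallyConvexSpace ℝ E]
    {X : Set E} (hXcomp : IsCompact X) (hXconv : Convex ℝ X)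
    {p : E} (hp : p ∈ Set.extremePoints ℝ X) {K : Set E} (hKX : K ⊆ X) (hK : IsCompact K)
    (hpK : p ∉ K) : p ∉ closure (convexHull ℝ K) := by
  intro hmem
  have hXcl : IsClosed X := hXcomp.isClosed
  -- a symmetric neighborhood `W₁` of 0 with `(p + W₁) ∩ K = ∅`
  have hKc : IsClosed K := hK.isClosed
  have hW0 : (fun w : E => p + w) ⁻¹' Kᶜ ∈ 𝓝 (0 : E) := by
    apply ContinuousAt.preimage_mem_nhds (by fun_prop)
    simpa using hKc.isOpen_compl.mem_nhds hpK
  set W0 : Set E := (fun w : E => p + w) ⁻¹' Kᶜ with hW0def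
  set W1 : Set E := W0 ∩ (-W0) with hW1def
  have hW1 : W1 ∈ 𝓝 (0 : E) := by
    refine Filter.inter_mem hW0 ?_
    simpa using (continuous_neg.continuousAt (x := (0:E))).preimage_mem_nhds (by simpa using hW0)
  -- `W₂` with `W₂ + W₂ ⊆ W₁`
  obtain ⟨W2, hW2, hW2add⟩ := exists_nhds_zero_half hW1
  -- a convex neighborhood `V ⊆ W₂` of 0
  obtain ⟨V, ⟨hV, hVconv⟩, hVW2⟩ :=
    (LocallyConvexSpace.convex_basis_zero ℝ E).mem_iff.1 hW2
  -- `closure V ⊆ W₁`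
  have hclV : closure V ⊆ W1 := by
    intro x hx
    have hT : {y : E | x - y ∈ W2} ∈ 𝓝 x := by
      apply ContinuousAt.preimage_mem_nhds (f := fun y : E => x - y) (by fun_prop)
      simpa using hW2
    obtain ⟨v, hvT, hvV⟩ := mem_closure_iff_nhds.1 hx _ hT
    have : v + (x - v) ∈ W1 := hW2add v (hVW2 hvV) (x - v) hvT
    simpa using this
  -- finite cover of `K` by translates of `V`
  have hcover : ∀ x ∈ K, (fun y : E => y - x) ⁻¹' V ∈ 𝓝 x := by
    intro x _
    apply ContinuousAt.preimage_mem_nhds (by fun_prop)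
    simpa using hV
  obtain ⟨s, hsK, hscov⟩ := hK.elim_nhds_subcover (fun x => (fun y : E => y - x) ⁻¹' V) hcover
  -- the local compact convex pieces
  set C : E → Set E := fun x => closure (convexHull ℝ (K ∩ (fun y : E => y - x) ⁻¹' V)) with hCdef
  have hCX : ∀ x, C x ⊆ X := by
    intro x
    exact closure_minimal (convexHull_min (fun y hy => hKX hy.1) hXconv) hXcl
  have hCconv : ∀ x, Convex ℝ (C x) := fun x => (convex_convexHull ℝ _).closure
  have hCcomp : ∀ x, IsCompact (C x) := fun x =>
    hXcomp.of_isClosed_subset isClosed_closure (hCX x)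
  -- each piece lies in `x + closure V`
  have hCsmall : ∀ x, C x ⊆ {y : E | y - x ∈ closure V} := by
    intro x
    apply closure_minimal
    · apply convexHull_min
      · exact fun y hy => subset_closure hy.2
      · intro a ha b hb u v hu hv huv
        have hxx : u • x + v • x = x := by rw [← add_smul, huv, one_smul]
        have key : (u • a + v • b) - x = u • (a - x) + v • (b - x) := by
          rw [smul_sub, smul_sub,
            show u • a - u • x + (v • b - v • x) = u • a + v • b - (u • x + v • x) by abel, hxx]
        show (u • a + v • b) - x ∈ closure V
        rw [key]
        exact hVconv.closure ha hb hu hv huv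
    · exact isClosed_closure.preimage (continuous_id.sub continuous_const)
  -- the convex hull of the union of the pieces is compact, hence closed, and contains `conv K`
  have hJcomp : IsCompact (convexHull ℝ (⋃ x ∈ s, C x)) :=
    aux_isCompact_convexHull_biUnion s C (fun a _ => hCcomp a) (fun a _ => hCconv a)
  have hKsub : K ⊆ ⋃ x ∈ s, C x := by
    intro y hy
    obtain ⟨x, hxs, hyx⟩ := mem_iUnion₂.1 (hscov hy)
    exact mem_iUnion₂.2 ⟨x, hxs, subset_closure (subset_convexHull ℝ _ ⟨hy, hyx⟩)⟩
  have hsubJ : closure (convexHull ℝ K) ⊆ convexHull ℝ (⋃ x ∈ s, C x) :=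
    closure_minimal (convexHull_mono hKsub) hJcomp.isClosed
  -- an extreme point in that hull lies in one of the pieces
  obtain ⟨x, hxs, hpx⟩ := aux_extreme_mem_of_mem_convexHull_biUnion hXconv hp s C
    (fun a _ => hCX a) (fun a _ => hCconv a) (hsubJ hmem)
  -- contradiction: `x ∈ K` but `x ∈ p + W₀`
  have hpxV : p - x ∈ W1 := hclV (hCsmall x hpx)
  have hxK : x ∈ K := hsK x hxs
  have : x - p ∈ W0 := by
    have := hpxV.2
    simpa [neg_sub] using this
  exact (this : p + (x - p) ∈ Kᶜ) (by simpa using hxK)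

end Aux

/-- Near an extreme point of a compact convex set, open half-spaces form a basis of
neighborhoods: every neighborhood of an extreme point `p` inside `X` contains a set of the
form `{x ∈ X | φ x > 0}` for some continuous affine `φ` with `φ p > 0`. -/
theorem halfspace_basis_at_extremePoint
    {E : Type*} [AddCommGroup E] [Module ℝ E] [TopologicalSpace E]
    [IsTopologicalAddGroup E] [ContinuousSMul ℝ E] [T2Space E]
    [LocallyConvexSpace ℝ E] [SeparatingDual ℝ E]
    (X : Set E) (hXne : X.Nonempty) (hXcomp : IsCompact X) (hXconv : Convex ℝ X)
    (p : E) (hp : p ∈ Set.extremePoints ℝ X)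
    (U : Set E) (hUX : U ⊆ X) (hU : U ∈ nhdsWithin p X) :
    ∃ φ : E → ℝ, ContinuousOn φ X ∧
      (∀ x ∈ X, ∀ y ∈ X, ∀ t ∈ Icc (0:ℝ) 1,
        φ (t • x + (1 - t) • y) = t * φ x + (1 - t) * φ y) ∧
      0 < φ p ∧ {x ∈ X | 0 < φ x} ⊆ U := by
  obtain ⟨V, hVopen, hpV, hVU⟩ := mem_nhdsWithin.1 hU
  set K : Set E := X \ V with hKdef
  have hKX : K ⊆ X := diff_subset
  have hKcomp : IsCompact K := hXcomp.inter_right hVopen.isClosed_compl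
  have hpK : p ∉ K := fun h => h.2 hpV
  have hnotmem : p ∉ closure (convexHull ℝ K) :=
    aux_extreme_not_mem_closure_convexHull hXcomp hXconv hp hKX hKcomp hpK
  obtain ⟨f, u, hfu, hup⟩ := geometric_hahn_banach_closed_point
    ((convex_convexHull ℝ K).closure) isClosed_closure hnotmem
  refine ⟨fun x => f x - u, ((f.continuous.sub continuous_const).continuousOn), ?_, ?_, ?_⟩
  · intro x _ y _ t ht
    simp only [map_add, map_smul, smul_eq_mul]
    ring
  · simpa [sub_pos] using hup
  · rintro x ⟨hxX, hxpos⟩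
    by_contra hxU
    have hxK : x ∈ K := by
      refine ⟨hxX, fun hxV => hxU (hVU ⟨hxV, hxX⟩)⟩
    have : f x < u := hfu x (subset_closure (subset_convexHull ℝ K hxK))
    simp only [mem_setOf_eq] at hxpos
    linarith
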